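/- Let n ≥ 3 be an integer with n ≠ 4, let Γ be the circular ladder graph, i.e. the Cartesian product of a cycle of length n with the complete graph K_2, and let G be a vertex-transitive group of automorphisms of Γ. Then every abelian normal subgroup of G is semiregular on the vertices of Γ. -/

import Mathlib

/- STATEMENT 9:
Let n ≥ 3, n ≠ 4, let Γ be the circular ladder graph (the Cartesian product of a cycle
of length n with K₂), and let G be a vertex-transitive group of automorphisms of Γ.
Then every abelian normal subgroup of G is semiregular on the vertices of Γ. -/

namespace Stmt9

open SimpleGraph

/-- The circular ladder graph: the box (Cartesian) product of the cycle of length `n`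
with the complete graph on two vertices. -/
def circularLadder (n : ℕ) : SimpleGraph (Fin n × Fin 2) :=
  cycleGraph n □ completeGraph (Fin 2)

/-- A set of permutations is semiregular if only the identity fixes a point. -/
def Semiregular {V : Type} (N : Subgroup (Equiv.Perm V)) : Prop :=
  ∀ n ∈ N, ∀ v : V, n v = v → n = 1

/-! ### Auxiliary lemmas -/

open Fin.CommRing

lemma fin_cast_nz {k m : ℕ} (h1 : 0 < m) (h2 : m < k + 2) : (m : Fin (k+2)) ≠ 0 := by
  intro h
  rw [Fin.natCast_eq_zero] at h
  have := Nat.le_of_dvd h1 h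
  omega

lemma fin_two_nz {k : ℕ} (hk : 1 ≤ k) : (2 : Fin (k+2)) ≠ 0 := by
  have h := fin_cast_nz (k := k) (m := 2) (by norm_num) (by omega)
  simpa using h

lemma fin_four_nz {k : ℕ} (hk : 1 ≤ k) (h4 : k + 2 ≠ 4) : (4 : Fin (k+2)) ≠ 0 := by
  have : ((4:ℕ) : Fin (k+2)) ≠ 0 := by
    intro h; rw [Fin.natCast_eq_zero] at h
    have h5 := Nat.le_of_dvd (by norm_num) h
    have hk2 : k ≤ 2 := by omega
    interval_cases k <;> omega
  simpa using this

lemma fin2_other : ∀ b c : Fin 2, c ≠ b → c = b + 1 := by decide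
lemma fin2_succ_ne : ∀ b : Fin 2, b + 1 ≠ b := by decide
lemma fin2_eq_of_ne_ne : ∀ a b c : Fin 2, a ≠ c → b ≠ c → a = b := by decide

section
variable {k : ℕ}

lemma adj_iff {u v : Fin (k+2) × Fin 2} :
    (circularLadder (k+2)).Adj u v ↔
      ((u.1 - v.1 = 1 ∨ v.1 - u.1 = 1) ∧ u.2 = v.2) ∨ (u.2 ≠ v.2 ∧ u.1 = v.1) := by
  simp [circularLadder, boxProd_adj, cycleGraph_adj, completeGraph, and_comm]

lemma adj_rung (a : Fin (k+2)) (b : Fin 2) :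
    (circularLadder (k+2)).Adj (a, b) (a, b+1) :=
  adj_iff.mpr (Or.inr ⟨(fin2_succ_ne b).symm, rfl⟩)

lemma adj_right (a : Fin (k+2)) (b : Fin 2) :
    (circularLadder (k+2)).Adj (a, b) (a+1, b) :=
  adj_iff.mpr (Or.inl ⟨Or.inr (by show a + 1 - a = 1; ring), rfl⟩)

lemma adj_left (a : Fin (k+2)) (b : Fin 2) :
    (circularLadder (k+2)).Adj (a, b) (a-1, b) :=
  adj_iff.mpr (Or.inl ⟨Or.inl (by show a - (a - 1) = 1; ring), rfl⟩)

lemma nbr {a : Fin (k+2)} {b : Fin 2} {w : Fin (k+2) × Fin 2}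
    (h : (circularLadder (k+2)).Adj (a,b) w) :
    w = (a+1, b) ∨ w = (a-1, b) ∨ w = (a, b+1) := by
  rw [adj_iff] at h
  rcases h with ⟨h1 | h1, h2⟩ | ⟨h1, h2⟩
  · right; left
    have : w.1 = a - 1 := by simp at h1 ⊢; linear_combination -h1
    exact Prod.ext this h2.symm
  · left
    have : w.1 = a + 1 := by simp at h1 ⊢; linear_combination h1
    exact Prod.ext this h2.symm
  · right; right
    exact Prod.ext h2.symm (fin2_other _ _ (by simpa using h1.symm))

lemma square (hk : 1 ≤ k) (hk4 : k + 2 ≠ 4) {a : Fin (k+2)} {b : Fin 2}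
    {w x : Fin (k+2) × Fin 2}
    (hw : (circularLadder (k+2)).Adj (a,b) w)
    (hx : (circularLadder (k+2)).Adj (a+1,b) x)
    (hwx : (circularLadder (k+2)).Adj w x)
    (hw1 : w ≠ (a+1,b)) (hx1 : x ≠ (a,b)) :
    w = (a, b+1) ∧ x = (a+1, b+1) := by
  have h2 := fin_two_nz hk
  have h4 := fin_four_nz hk hk4
  rcases nbr hw with rfl | rfl | rfl
  · exact absurd rfl hw1
  · rcases nbr hx with rfl | rfl | rfl
    · rw [adj_iff] at hwx
      rcases hwx with ⟨h1 | h1, -⟩ | ⟨h1, -⟩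
      · exact absurd (by simp at h1; linear_combination -h1) h4
      · simp at h1
        exact absurd (by linear_combination h1) h2
      · simp at h1
    · exact absurd (by norm_num) hx1
    · rw [adj_iff] at hwx
      rcases hwx with ⟨-, h1⟩ | ⟨-, h1⟩
      · exact absurd h1.symm (fin2_succ_ne b)
      · simp at h1
        exact absurd (by linear_combination -h1) h2
  · rcases nbr hx with rfl | rfl | rfl
    · rw [adj_iff] at hwx
      rcases hwx with ⟨-, h1⟩ | ⟨-, h1⟩
      · exact absurd h1 (fin2_succ_ne b)
      · simp at h1
        exact absurd (by linear_combination -h1) h2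
    · exact absurd (by norm_num) hx1
    · exact ⟨rfl, rfl⟩

/-- An edge is a "rung" if it lies in two squares with disjoint remaining vertices. -/
def IsRung (u v : Fin (k+2) × Fin 2) : Prop :=
  (circularLadder (k+2)).Adj u v ∧
  ∃ w x w' x' : Fin (k+2) × Fin 2,
    (circularLadder (k+2)).Adj u w ∧ (circularLadder (k+2)).Adj v x ∧
    (circularLadder (k+2)).Adj w x ∧
    (circularLadder (k+2)).Adj u w' ∧ (circularLadder (k+2)).Adj v x' ∧
    (circularLadder (k+2)).Adj w' x' ∧
    w ≠ v ∧ x ≠ u ∧ w' ≠ v ∧ x' ≠ u ∧ w ≠ w' ∧ w ≠ x' ∧ x ≠ w' ∧ x ≠ x'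

lemma isRung_symm {u v : Fin (k+2) × Fin 2} (h : IsRung u v) : IsRung v u := by
  obtain ⟨hadj, w, x, w', x', h1, h2, h3, h4, h5, h6, h7, h8, h9, h10, h11, h12, h13, h14⟩ := h
  exact ⟨hadj.symm, x, w, x', w', h2, h1, h3.symm, h5, h4, h6.symm,
    h8, h7, h10, h9, h14, h13, h12, h11⟩

lemma isRung_map {u v : Fin (k+2) × Fin 2} (g : Equiv.Perm (Fin (k+2) × Fin 2))
    (hg : ∀ u v, (circularLadder (k+2)).Adj (g u) (g v) ↔ (circularLadder (k+2)).Adj u v)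
    (h : IsRung u v) : IsRung (g u) (g v) := by
  obtain ⟨hadj, w, x, w', x', h1, h2, h3, h4, h5, h6, h7, h8, h9, h10, h11, h12, h13, h14⟩ := h
  refine ⟨(hg u v).mpr hadj, g w, g x, g w', g x', (hg _ _).mpr h1, (hg _ _).mpr h2,
    (hg _ _).mpr h3, (hg _ _).mpr h4, (hg _ _).mpr h5, (hg _ _).mpr h6,
    ?_, ?_, ?_, ?_, ?_, ?_, ?_, ?_⟩
  all_goals simp [g.injective.ne_iff]
  exacts [h7, h8, h9, h10, h11, h12, h13, h14]

lemma isRung_rung (hk : 1 ≤ k) (a : Fin (k+2)) (b : Fin 2) : IsRung (a,b) (a,b+1) := by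
  have h2 := fin_two_nz hk
  refine ⟨adj_rung a b, (a+1, b), (a+1, b+1), (a-1, b), (a-1, b+1),
    adj_right a b, ?_, adj_rung (a+1) b, adj_left a b, ?_, adj_rung (a-1) b,
    ?_, ?_, ?_, ?_, ?_, ?_, ?_, ?_⟩
  · exact adj_iff.mpr (Or.inl ⟨Or.inr (by show a + 1 - a = 1; ring), rfl⟩)
  · exact adj_iff.mpr (Or.inl ⟨Or.inl (by show a - (a - 1) = 1; ring), rfl⟩)
  · exact fun h => fin2_succ_ne b ((congrArg Prod.snd h).symm)
  · exact fun h => fin2_succ_ne b (congrArg Prod.snd h)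
  · exact fun h => fin2_succ_ne b ((congrArg Prod.snd h).symm)
  · exact fun h => fin2_succ_ne b (congrArg Prod.snd h)
  · intro h
    apply h2
    have h1 : a + 1 = a - 1 := congrArg Prod.fst h
    linear_combination h1
  · exact fun h => fin2_succ_ne b ((congrArg Prod.snd h).symm)
  · exact fun h => fin2_succ_ne b (congrArg Prod.snd h)
  · intro h
    apply h2
    have h1 : a + 1 = a - 1 := congrArg Prod.fst h
    linear_combination h1

lemma not_isRung_cycle (hk : 1 ≤ k) (hk4 : k + 2 ≠ 4) (a : Fin (k+2)) (b : Fin 2) :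
    ¬ IsRung (a,b) (a+1,b) := by
  rintro ⟨hadj, w, x, w', x', h1, h2, h3, h4, h5, h6, h7, h8, h9, h10, h11, -, -, -⟩
  obtain ⟨hw, -⟩ := square hk hk4 h1 h2 h3 h7 h8
  obtain ⟨hw', -⟩ := square hk hk4 h4 h5 h6 h9 h10
  exact h11 (hw.trans hw'.symm)

lemma isRung_fst (hk : 1 ≤ k) (hk4 : k + 2 ≠ 4) {u v : Fin (k+2) × Fin 2}
    (h : IsRung u v) : u.1 = v.1 := by
  by_contra hne
  have hadj := h.1
  rw [adj_iff] at hadj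
  rcases hadj with ⟨h1 | h1, h2⟩ | ⟨-, h1⟩
  · have hu : u = (v.1 + 1, v.2) := Prod.ext (by linear_combination h1) h2
    exact not_isRung_cycle hk hk4 v.1 v.2
      (by rw [Prod.mk.eta, ← hu]; exact isRung_symm h)
  · have hv : v = (u.1 + 1, u.2) := Prod.ext (by linear_combination h1) h2.symm
    exact not_isRung_cycle hk hk4 u.1 u.2 (by rw [Prod.mk.eta, ← hv]; exact h)
  · exact hne h1

lemma step_all {p : Fin (k+2) → Prop} (h0 : p 0) (hstep : ∀ a, p a → p (a+1)) :
    ∀ a, p a := by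
  have key : ∀ m : ℕ, p (m : Fin (k+2)) := by
    intro m
    induction m with
    | zero => simpa using h0
    | succ m ih =>
      have e : ((m+1 : ℕ) : Fin (k+2)) = (m : Fin (k+2)) + 1 := by push_cast; ring
      rw [e]; exact hstep _ ih
  intro a
  have := key a.val
  rwa [Fin.cast_val_eq_self] at this

/-- Structure of automorphisms of the circular ladder. -/
lemma perm_form (hk : 1 ≤ k) (hk4 : k + 2 ≠ 4) (g : Equiv.Perm (Fin (k+2) × Fin 2))
    (hg : ∀ u v, (circularLadder (k+2)).Adj (g u) (g v) ↔ (circularLadder (k+2)).Adj u v) :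
    ∃ c : Fin (k+2), ∃ t : Fin 2,
      (∀ a b, g (a,b) = (c + a, b + t)) ∨ (∀ a b, g (a,b) = (c - a, b + t)) := by
  have h2 := fin_two_nz hk
  -- rungs go to rungs
  have hr1 : ∀ (a : Fin (k+2)) (b : Fin 2), (g (a, b+1)).1 = (g (a,b)).1 := by
    intro a b
    exact (isRung_fst hk hk4 (isRung_map g hg (isRung_rung hk a b))).symm
  have hr2 : ∀ (a : Fin (k+2)) (b : Fin 2), (g (a, b+1)).2 ≠ (g (a,b)).2 := by
    intro a b hEq
    have : g (a, b+1) = g (a, b) := Prod.ext (hr1 a b) hEq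
    exact fin2_succ_ne b (congrArg Prod.snd (g.injective this))
  have hone : (1 : Fin (k+2)) ≠ 0 := by
    have := fin_cast_nz (k := k) (m := 1) (by norm_num) (by omega)
    simpa using this
  -- images of consecutive vertices on level 0
  have hstep : ∀ a : Fin (k+2),
      ((g (a+1,0)).1 - (g (a,0)).1 = 1 ∨ (g (a,0)).1 - (g (a+1,0)).1 = 1) ∧
      (g (a+1,0)).2 = (g (a,0)).2 := by
    intro a
    have hadj : (circularLadder (k+2)).Adj (g (a,0)) (g (a+1,0)) :=
      (hg _ _).mpr (adj_right a 0)
    rw [adj_iff] at hadj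
    rcases hadj with ⟨h1, hsnd⟩ | ⟨hsnd, hfst⟩
    · exact ⟨h1.symm.imp (fun h => h) (fun h => h), hsnd.symm⟩
    · -- would be a rung: g (a+1,0) = g (a,1), contradiction
      exfalso
      have hA0 : (g ((a : Fin (k+2)), (1 : Fin 2))).1 = (g (a,0)).1 := by
        have := hr1 a 0
        rwa [show (0:Fin 2)+1 = 1 by decide] at this
      have e1 : (g (a+1,0)).1 = (g ((a : Fin (k+2)), (1 : Fin 2))).1 :=
        hfst.symm.trans hA0.symm
      have e2 : (g (a+1,0)).2 = (g ((a : Fin (k+2)), (1 : Fin 2))).2 := by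
        have h1' := hr2 a 0
        simp only [show (0 : Fin 2) + 1 = 1 by decide] at h1'
        exact fin2_eq_of_ne_ne _ _ _ (Ne.symm hsnd) h1'
      have : ((a+1 : Fin (k+2)), (0 : Fin 2)) = ((a : Fin (k+2)), (1 : Fin 2)) :=
        g.injective (Prod.ext e1 e2)
      have := congrArg Prod.snd this
      simp at this
  -- differences
  set d : Fin (k+2) → Fin (k+2) := fun a => (g (a+1,0)).1 - (g (a,0)).1 with hd
  have hdval : ∀ a, d a = 1 ∨ d a = -1 := by
    intro a
    rcases (hstep a).1 with h | h
    · exact Or.inl h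
    · exact Or.inr (by rw [hd]; simp; linear_combination -h)
  have hsndall : ∀ a, (g (a,0)).2 = (g (0,0)).2 := by
    apply step_all
    · rfl
    · intro a ih
      rw [(hstep a).2, ih]
  have mixed : ∀ a : Fin (k+2), d (a+1) + d a = 0 → False := by
    intro a hsum
    have hfsteq : (g (a+1+1,0)).1 = (g (a,0)).1 := by
      simp only [hd] at hsum
      linear_combination hsum
    have heq : g (a+1+1, (0:Fin 2)) = g (a, (0:Fin 2)) :=
      Prod.ext hfsteq (((hstep (a+1)).2).trans (hstep a).2)
    have hinj : a + 1 + 1 = a := congrArg Prod.fst (g.injective heq)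
    exact h2 (by linear_combination hinj)
  have hdd : ∀ a, d (a+1) = d a := by
    intro a
    rcases hdval a with ha | ha <;> rcases hdval (a+1) with hb | hb
    · rw [ha, hb]
    · exact ((mixed a (by rw [ha, hb]; ring)).elim)
    · exact ((mixed a (by rw [ha, hb]; ring)).elim)
    · rw [ha, hb]
  have hdall : ∀ a, d a = d 0 := step_all rfl (fun a ih => (hdd a).trans ih)
  have hb01 : ∀ b : Fin 2, b = 0 ∨ b = 1 := by decide
  have h01 : (0 : Fin 2) + 1 = 1 := by decide
  have hA : ∀ a : Fin (k+2), (g (a, (1:Fin 2))).1 = (g (a,0)).1 := by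
    intro a
    have := hr1 a 0
    rwa [h01] at this
  have hB : ∀ a : Fin (k+2), (g (a, (1:Fin 2))).2 = (g (a,0)).2 + 1 := by
    intro a
    have := hr2 a 0
    rw [h01] at this
    exact fin2_other _ _ this
  refine ⟨(g (0,0)).1, (g (0,0)).2, ?_⟩
  rcases hdval 0 with h0 | h0
  · left
    have hfst0 : ∀ a, (g (a,0)).1 = (g (0,0)).1 + a := by
      apply step_all
      · simp
      · intro a ih
        have hda : d a = 1 := (hdall a).trans h0
        simp only [hd] at hda
        linear_combination hda + ih
    intro a b
    rcases hb01 b with rfl | rfl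
    · refine Prod.ext ?_ ?_
      · exact hfst0 a
      · show (g (a,0)).2 = 0 + (g (0,0)).2
        rw [zero_add]; exact hsndall a
    · refine Prod.ext ?_ ?_
      · show (g (a,(1:Fin 2))).1 = (g (0,0)).1 + a
        rw [hA a]; exact hfst0 a
      · show (g (a,(1:Fin 2))).2 = 1 + (g (0,0)).2
        rw [hB a, hsndall a, add_comm]
  · right
    have hfst0 : ∀ a, (g (a,0)).1 = (g (0,0)).1 - a := by
      apply step_all
      · simp
      · intro a ih
        have hda : d a = -1 := (hdall a).trans h0
        simp only [hd] at hda
        linear_combination hda + ih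
    intro a b
    rcases hb01 b with rfl | rfl
    · refine Prod.ext ?_ ?_
      · exact hfst0 a
      · show (g (a,0)).2 = 0 + (g (0,0)).2
        rw [zero_add]; exact hsndall a
    · refine Prod.ext ?_ ?_
      · show (g (a,(1:Fin 2))).1 = (g (0,0)).1 - a
        rw [hA a]; exact hfst0 a
      · show (g (a,(1:Fin 2))).2 = 1 + (g (0,0)).2
        rw [hB a, hsndall a, add_comm]

lemma fin2_cancel : ∀ j t : Fin 2, j + t = j → t = 0 := by decide

/-- A rotation-type automorphism with a fixed point is the identity. -/
lemma plus_fixed {c : Fin (k+2)} {t : Fin 2} (m : Equiv.Perm (Fin (k+2) × Fin 2))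
    (hf : ∀ a b, m (a,b) = (c + a, b + t)) {i : Fin (k+2)} {j : Fin 2}
    (hv : m (i,j) = (i,j)) : m = 1 := by
  rw [hf i j] at hv
  have hc : c = 0 := by
    have h1 : c + i = i := congrArg Prod.fst hv
    linear_combination h1
  have ht : t = 0 := fin2_cancel j t (congrArg Prod.snd hv)
  apply Equiv.ext
  rintro ⟨a, b⟩
  rw [hf a b, hc, ht]
  simp

end

theorem stmt9 (n : ℕ) (hn : 3 ≤ n) (hn4 : n ≠ 4)
    (G : Subgroup (Equiv.Perm (Fin n × Fin 2)))
    (hAut : ∀ g ∈ G, ∀ u v, (circularLadder n).Adj (g u) (g v) ↔ (circularLadder n).Adj u v)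
    (hTrans : ∀ u v : Fin n × Fin 2, ∃ g ∈ G, g u = v) :
    ∀ N : Subgroup (Equiv.Perm (Fin n × Fin 2)), N ≤ G →
      (∀ g ∈ G, ∀ m ∈ N, g * m * g⁻¹ ∈ N) →
      (∀ a ∈ N, ∀ b ∈ N, a * b = b * a) →
      Semiregular N := by
  obtain ⟨k, rfl⟩ : ∃ k, n = k + 2 := ⟨n - 2, by omega⟩
  have hk : 1 ≤ k := by omega
  intro N hNG hNorm hComm m hm v hv
  by_contra hm1
  obtain ⟨i, j⟩ := v
  obtain ⟨c, t, hform⟩ := perm_form hk hn4 m (hAut m (hNG hm))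
  rcases hform with hf | hf
  · exact hm1 (plus_fixed m hf hv)
  · -- m is a reflection fixing (i,j): m (a,b) = (i + i - a, b)
    rw [hf i j] at hv
    have hc : c = i + i := by
      have h1 : c - i = i := congrArg Prod.fst hv
      linear_combination h1
    -- get g with g (i,j) = (i+1,j)
    obtain ⟨g, hgG, hgv⟩ := hTrans (i, j) (i+1, j)
    set m' := g * m * g⁻¹ with hm'def
    have hm'N : m' ∈ N := hNorm g hgG m hm
    have hm'1 : m' ≠ 1 := by
      intro h
      apply hm1
      calc m = g⁻¹ * (g * m * g⁻¹) * g := by group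
        _ = g⁻¹ * 1 * g := by rw [← hm'def, h]
        _ = 1 := by group
    have hginv : g⁻¹ (i+1, j) = (i, j) := by
      rw [← hgv]
      exact g.symm_apply_apply (i, j)
    have hvfix' : m' (i+1, j) = (i+1, j) := by
      rw [hm'def]
      show g (m (g⁻¹ (i+1,j))) = (i+1, j)
      rw [hginv, hf i j, hv]
      exact hgv
    obtain ⟨c', t', hform'⟩ := perm_form hk hn4 m' (hAut m' (hNG hm'N))
    rcases hform' with hf' | hf'
    · exact hm'1 (plus_fixed m' hf' hvfix')
    · rw [hf' (i+1) j] at hvfix'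
      have hc' : c' = (i+1) + (i+1) := by
        have h1 : c' - (i+1) = i+1 := congrArg Prod.fst hvfix'
        linear_combination h1
      have ht : t = 0 := fin2_cancel j t (congrArg Prod.snd hv)
      have ht' : t' = 0 := fin2_cancel j t' (congrArg Prod.snd hvfix')
      have hcomm := hComm m hm m' hm'N
      have happ : m (m' ((0 : Fin (k+2)), (0 : Fin 2))) = m' (m (0, 0)) := by
        rw [← Equiv.Perm.mul_apply, ← Equiv.Perm.mul_apply, hcomm]
      rw [hf' 0 0, hf (c' - 0) (0 + t'), hf 0 0, hf' (c - 0) (0 + t)] at happ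
      have hfsteq : c - (c' - 0) = c' - (c - 0) := congrArg Prod.fst happ
      apply fin_four_nz hk hn4
      rw [hc, hc'] at hfsteq
      linear_combination -hfsteq

end Stmt9
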